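/- arXiv:2008.08858 — 3 statements merged into one kernel-verified Lean document; each statement's English description precedes it below -/
import Mathlib

section
/- Let f : [1,∞) → [1,∞) be an admissible function and let X = (X_k)_{k≥1} be independent Bernoulli random variables with P[X_k = 1] = 1/(k f(k)). Let N_n = |E_X ∩ (2^n, 2^{n+1}]|. Then almost surely, limsup_{n→∞} N_n · N_{n+1} = 0, i.e., for all sufficiently large n, N_n · N_{n+1} = 0. -/
open MeasureTheory ProbabilityTheory

/-- A function `f : [1,∞) → [1,∞)` is admissible if it is non-decreasing and for every
`ε > 0`, `∫_1^∞ dx/(x f(x)) = ∞` and `∫_1^∞ dx/(x f(x)^{1+ε}) < ∞`. -/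
def Admissible (f : ℝ → ℝ) : Prop :=
  (∀ x, 1 ≤ x → 1 ≤ f x) ∧ MonotoneOn f (Set.Ici 1) ∧
  (∫⁻ x in Set.Ici (1 : ℝ), ENNReal.ofReal (1 / (x * f x)) = ⊤) ∧
  ∀ ε : ℝ, 0 < ε → ∫⁻ x in Set.Ici (1 : ℝ), ENNReal.ofReal (1 / (x * f x ^ (1 + ε))) ≠ ⊤

open scoped ENNReal

theorem stmt4 {Ω : Type*} [MeasurableSpace Ω] (μ : Measure Ω) [IsProbabilityMeasure μ]
    (f : ℝ → ℝ) (hf : Admissible f)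
    (X : ℕ → Ω → Bool) (hmeas : ∀ k, Measurable (X k))
    (hind : iIndepFun X μ)
    (hprob : ∀ k : ℕ, 1 ≤ k → μ {ω | X k ω = true} = ENNReal.ofReal (1 / (k * f k)))
    (N : ℕ → Ω → ℕ)
    (hN : ∀ n ω, N n ω = ((Finset.Ioc (2 ^ n) (2 ^ (n + 1))).filter
      (fun k => X k ω = true)).card) :
    ∀ᵐ ω ∂μ, ∀ᶠ n in Filter.atTop, N n ω * N (n + 1) ω = 0 := by
  classical
  obtain ⟨hf1, hfmono, -, hfint⟩ := hf
  have h2 : ∀ n : ℕ, (1:ℝ) ≤ 2 ^ n := fun n => one_le_pow₀ (by norm_num)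
  have hFone : ∀ n : ℕ, 1 ≤ f (2 ^ n) := fun n => hf1 _ (h2 n)
  have hFpos : ∀ n : ℕ, 0 < f (2 ^ n) := fun n => lt_of_lt_of_le one_pos (hFone n)
  have h2le : ∀ n : ℕ, (2:ℝ) ^ n ≤ 2 ^ (n+1) := by
    intro n
    apply pow_le_pow_right₀ (by norm_num) (Nat.le_succ n)
  have hFmono : ∀ n : ℕ, f (2 ^ n) ≤ f (2 ^ (n+1)) := fun n =>
    hfmono (h2 n) (h2 (n+1)) (h2le n)
  have hint := hfint 1 one_pos
  -- summability of 1 / f(2^{n+1})^2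
  have key : (∑' n : ℕ, ENNReal.ofReal (1 / f ((2:ℝ) ^ (n+1)) ^ 2)) ≠ ⊤ := by
    have hrpow : ∀ x : ℝ, 1 ≤ x → f x ^ ((1:ℝ) + 1) = f x ^ 2 := by
      intro x hx
      rw [show ((1:ℝ)+1) = ((2:ℕ):ℝ) by norm_num, Real.rpow_natCast]
    have hle : ∀ n : ℕ, ENNReal.ofReal (1 / f ((2:ℝ) ^ (n+1)) ^ 2) ≤
        2 * ∫⁻ x in Set.Ico ((2:ℝ)^n) (2^(n+1)),
          ENNReal.ofReal (1 / (x * f x ^ ((1:ℝ)+1))) := by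
      intro n
      have hconst : ENNReal.ofReal (1 / (2^(n+1) * f ((2:ℝ) ^ (n+1)) ^ 2)) *
          volume (Set.Ico ((2:ℝ)^n) (2^(n+1))) ≤
          ∫⁻ x in Set.Ico ((2:ℝ)^n) (2^(n+1)),
            ENNReal.ofReal (1 / (x * f x ^ ((1:ℝ)+1))) := by
        rw [← setLIntegral_const]
        refine lintegral_mono_ae (ae_restrict_of_forall_mem measurableSet_Ico ?_)
        rintro x ⟨hx1, hx2⟩
        have hx1' : (1:ℝ) ≤ x := le_trans (h2 n) hx1
        have hx0 : 0 < x := lt_of_lt_of_le one_pos hx1'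
        have hfx1 : 1 ≤ f x := hf1 x hx1'
        have hfxle : f x ≤ f (2 ^ (n+1)) := hfmono hx1' (h2 (n+1)) hx2.le
        apply ENNReal.ofReal_le_ofReal
        rw [hrpow x hx1']
        have hfx0 : (0:ℝ) < f x := lt_of_lt_of_le one_pos hfx1
        apply one_div_le_one_div_of_le (mul_pos hx0 (pow_pos hfx0 2))
        apply mul_le_mul hx2.le (by nlinarith) (by positivity) (by positivity)
      calc ENNReal.ofReal (1 / f ((2:ℝ) ^ (n+1)) ^ 2)
          = 2 * (ENNReal.ofReal (1 / (2^(n+1) * f ((2:ℝ) ^ (n+1)) ^ 2)) *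
            volume (Set.Ico ((2:ℝ)^n) (2^(n+1)))) := by
            rw [Real.volume_Ico,
              show ((2:ℝ≥0∞)) = ENNReal.ofReal 2 from (ENNReal.ofReal_ofNat 2).symm,
              ← ENNReal.ofReal_mul
                (div_nonneg zero_le_one (mul_nonneg (by positivity) (sq_nonneg _))),
              ← ENNReal.ofReal_mul (by norm_num)]
            congr 1
            have hF := (hFpos (n+1)).ne'
            have h2n : (0:ℝ) < 2 ^ n := by positivity
            field_simp
            ring
        _ ≤ _ := mul_le_mul_right hconst 2
    have hdisj : Pairwise (Function.onFun Disjoint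
        fun n : ℕ => Set.Ico ((2:ℝ)^n) (2^(n+1))) := by
      intro m n hmn
      wlog h : m < n generalizing m n
      · exact (this hmn.symm (by omega)).symm
      apply Set.disjoint_left.2
      rintro x ⟨_, hx2⟩ ⟨hx3, _⟩
      have : (2:ℝ)^(m+1) ≤ 2^n := pow_le_pow_right₀ (by norm_num) h
      linarith
    have hUsub : (⋃ n : ℕ, Set.Ico ((2:ℝ)^n) (2^(n+1))) ⊆ Set.Ici 1 := by
      rintro x ⟨_, ⟨n, rfl⟩, hx1, -⟩
      exact le_trans (h2 n) hx1
    refine ne_top_of_le_ne_top (ENNReal.mul_ne_top (ENNReal.ofNat_ne_top (n := 2)) hint) ?_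
    calc (∑' n : ℕ, ENNReal.ofReal (1 / f ((2:ℝ) ^ (n+1)) ^ 2))
        ≤ ∑' n : ℕ, 2 * ∫⁻ x in Set.Ico ((2:ℝ)^n) (2^(n+1)),
          ENNReal.ofReal (1 / (x * f x ^ ((1:ℝ)+1))) := ENNReal.tsum_le_tsum hle
      _ = 2 * ∑' n : ℕ, ∫⁻ x in Set.Ico ((2:ℝ)^n) (2^(n+1)),
          ENNReal.ofReal (1 / (x * f x ^ ((1:ℝ)+1))) := ENNReal.tsum_mul_left
      _ = 2 * ∫⁻ x in ⋃ n : ℕ, Set.Ico ((2:ℝ)^n) (2^(n+1)),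
          ENNReal.ofReal (1 / (x * f x ^ ((1:ℝ)+1))) := by
          rw [lintegral_iUnion (fun n => measurableSet_Ico) hdisj]
      _ ≤ 2 * ∫⁻ x in Set.Ici (1:ℝ),
          ENNReal.ofReal (1 / (x * f x ^ ((1:ℝ)+1))) :=
          mul_le_mul_right (lintegral_mono_set hUsub) 2
  -- the bad events
  set B : ℕ → Finset ℕ := fun n => Finset.Ioc (2^n) (2^(n+1)) with hB
  set s : ℕ → Set Ω := fun n => {ω | N n ω * N (n+1) ω ≠ 0} with hs
  have hsumB : ∀ n, ∑ k ∈ B n, μ (X k ⁻¹' {true}) ≤ ENNReal.ofReal (1 / f ((2:ℝ)^n)) := by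
    intro n
    have hP : ∀ k ∈ B n, μ (X k ⁻¹' {true}) ≤
        ENNReal.ofReal (1 / ((2:ℝ)^n * f ((2:ℝ)^n))) := by
      intro k hk
      rw [hB, Finset.mem_Ioc] at hk
      have h1n : 1 ≤ 2^n := Nat.one_le_two_pow
      have hk1 : 1 ≤ k := by omega
      have hXk : X k ⁻¹' {true} = {ω | X k ω = true} := rfl
      rw [hXk, hprob k hk1]
      apply ENNReal.ofReal_le_ofReal
      have hkR : (2:ℝ)^n ≤ (k:ℝ) := by exact_mod_cast hk.1.le
      have hk1R : (1:ℝ) ≤ k := le_trans (h2 n) hkR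
      have hfk : f (2^n) ≤ f k := hfmono (h2 n) hk1R hkR
      apply one_div_le_one_div_of_le (mul_pos (by positivity) (hFpos n))
      exact mul_le_mul hkR hfk (hFpos n).le (by positivity)
    calc ∑ k ∈ B n, μ (X k ⁻¹' {true})
        ≤ (B n).card • ENNReal.ofReal (1 / ((2:ℝ)^n * f ((2:ℝ)^n))) :=
          Finset.sum_le_card_nsmul _ _ _ hP
      _ = ENNReal.ofReal (1 / f ((2:ℝ)^n)) := by
        have hcard : (B n).card = 2^n := by
          rw [hB]; simp only [Nat.card_Ioc]; rw [pow_succ]; omega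
        have hcast : ((2^n : ℕ) : ℝ≥0∞) = ENNReal.ofReal ((2:ℝ)^n) := by
          rw [← ENNReal.ofReal_natCast]; norm_num
        rw [hcard, nsmul_eq_mul, hcast, ← ENNReal.ofReal_mul (by positivity)]
        congr 1
        have hF := (hFpos n).ne'
        field_simp
  have hμs : ∀ n, μ (s n) ≤ ENNReal.ofReal (1 / f ((2:ℝ)^n) ^ 2) := by
    intro n
    have hsub : s n ⊆ ⋃ k ∈ B n, ⋃ l ∈ B (n+1), (X k ⁻¹' {true} ∩ X l ⁻¹' {true}) := by
      intro ω hω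
      have hω' : N n ω * N (n+1) ω ≠ 0 := hω
      have h1 : N n ω ≠ 0 := fun h => hω' (by rw [h, zero_mul])
      have h2' : N (n+1) ω ≠ 0 := fun h => hω' (by rw [h, mul_zero])
      rw [hN] at h1 h2'
      obtain ⟨k, hk⟩ := Finset.card_pos.1 (Nat.pos_of_ne_zero h1)
      obtain ⟨l, hl⟩ := Finset.card_pos.1 (Nat.pos_of_ne_zero h2')
      rw [Finset.mem_filter] at hk hl
      exact Set.mem_biUnion hk.1 (Set.mem_biUnion hl.1 ⟨hk.2, hl.2⟩)
    have step1 : μ (s n) ≤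
        ∑ k ∈ B n, ∑ l ∈ B (n+1), μ (X k ⁻¹' {true} ∩ X l ⁻¹' {true}) := by
      refine le_trans (measure_mono hsub) ?_
      refine le_trans (measure_biUnion_finset_le _ _) ?_
      exact Finset.sum_le_sum fun k _ => measure_biUnion_finset_le _ _
    have step2 : ∑ k ∈ B n, ∑ l ∈ B (n+1), μ (X k ⁻¹' {true} ∩ X l ⁻¹' {true})
        = (∑ k ∈ B n, μ (X k ⁻¹' {true})) * (∑ l ∈ B (n+1), μ (X l ⁻¹' {true})) := by
      rw [Finset.sum_mul_sum]
      refine Finset.sum_congr rfl fun k hk => Finset.sum_congr rfl fun l hl => ?_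
      have hkl : k ≠ l := by
        rw [hB, Finset.mem_Ioc] at hk hl
        exact ne_of_lt (lt_of_le_of_lt hk.2 hl.1)
      exact ((hind.indepFun hkl).measure_inter_preimage_eq_mul
        {true} {true} (measurableSet_singleton true) (measurableSet_singleton true))
    have step3 : (∑ k ∈ B n, μ (X k ⁻¹' {true})) * (∑ l ∈ B (n+1), μ (X l ⁻¹' {true}))
        ≤ ENNReal.ofReal (1 / f ((2:ℝ)^n)) * ENNReal.ofReal (1 / f ((2:ℝ)^(n+1))) :=
      mul_le_mul' (hsumB n) (hsumB (n+1))
    have step4 : ENNReal.ofReal (1 / f ((2:ℝ)^n)) * ENNReal.ofReal (1 / f ((2:ℝ)^(n+1)))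
        ≤ ENNReal.ofReal (1 / f ((2:ℝ)^n) ^ 2) := by
      rw [← ENNReal.ofReal_mul (div_nonneg zero_le_one (hFpos n).le)]
      apply ENNReal.ofReal_le_ofReal
      rw [div_mul_div_comm, one_mul]
      apply one_div_le_one_div_of_le (pow_pos (hFpos n) 2)
      nlinarith [hFpos n, hFpos (n+1), hFmono n]
    exact le_trans step1 (le_trans (le_of_eq step2) (le_trans step3 step4))
  have htsum : (∑' n, μ (s n)) ≠ ⊤ := by
    refine ne_top_of_le_ne_top ?_ (ENNReal.tsum_le_tsum hμs)
    rw [tsum_eq_zero_add' ENNReal.summable]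
    exact ENNReal.add_ne_top.2 ⟨ENNReal.ofReal_ne_top, key⟩
  filter_upwards [ae_eventually_notMem htsum] with ω hω
  exact hω.mono fun n hn => not_ne_iff.1 hn
end

section
/- Let α > 0, f : [1,∞) → [1,∞) admissible, C = ⌊1/α⌋, and X = (X_k) independent Bernoulli with P[X_k=1] = 1/(k f(k)^α). For any a > 1 and N_n = |E_X ∩ (a^n, a^{n+1}]|, we have Σ_n P[N_n ≥ C+1] < ∞, hence almost surely N_n ≤ C for all sufficiently large n. -/
open MeasureTheory ProbabilityTheory

lemma aux_esymm {ι : Type*} [DecidableEq ι] (p : ι → ENNReal) (I : Finset ι) :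
    ∀ m : ℕ, ∑ S ∈ I.powersetCard m, ∏ k ∈ S, p k ≤ (∑ k ∈ I, p k) ^ m := by
  induction I using Finset.induction with
  | empty => intro m; cases m <;> simp
  | @insert b J hbJ ih =>
    intro m
    cases m with
    | zero => simp
    | succ m =>
      have hinj : Set.InjOn (insert b) ((J.powersetCard m : Finset (Finset ι)) : Set (Finset ι)) := by
        intro S hS T hT h
        have hbS : b ∉ S := fun hb => hbJ ((Finset.mem_powersetCard.1 hS).1 hb)
        have hbT : b ∉ T := fun hb => hbJ ((Finset.mem_powersetCard.1 hT).1 hb)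
        have := congrArg (Finset.erase · b) h
        simpa [Finset.erase_insert hbS, Finset.erase_insert hbT] using this
      have hdisj : Disjoint (J.powersetCard (m+1)) ((J.powersetCard m).image (insert b)) := by
        rw [Finset.disjoint_right]
        intro S hS hS'
        obtain ⟨T, hT, rfl⟩ := Finset.mem_image.1 hS
        exact hbJ ((Finset.mem_powersetCard.1 hS').1 (Finset.mem_insert_self b T))
      rw [Finset.powersetCard_succ_insert hbJ, Finset.sum_union hdisj,
        Finset.sum_image hinj, Finset.sum_insert hbJ]
      have h1 : ∀ T ∈ J.powersetCard m, ∏ k ∈ insert b T, p k = p b * ∏ k ∈ T, p k := by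
        intro T hT
        have hbT : b ∉ T := fun hb => hbJ ((Finset.mem_powersetCard.1 hT).1 hb)
        rw [Finset.prod_insert hbT]
      rw [Finset.sum_congr rfl h1, ← Finset.mul_sum]
      calc ∑ S ∈ J.powersetCard (m+1), ∏ k ∈ S, p k + p b * ∑ T ∈ J.powersetCard m, ∏ k ∈ T, p k
          ≤ (∑ k ∈ J, p k) ^ (m+1) + p b * (∑ k ∈ J, p k) ^ m := by
            gcongr
            exacts [ih (m+1), ih m]
        _ ≤ (p b + ∑ k ∈ J, p k) ^ (m+1) := by
            rw [show (p b + ∑ k ∈ J, p k) ^ (m+1) = (p b + ∑ k ∈ J, p k) * (p b + ∑ k ∈ J, p k) ^ m from pow_succ' _ _]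
            calc (∑ k ∈ J, p k) ^ (m+1) + p b * (∑ k ∈ J, p k) ^ m
                = (p b + ∑ k ∈ J, p k) * (∑ k ∈ J, p k) ^ m := by rw [pow_succ']; ring
              _ ≤ (p b + ∑ k ∈ J, p k) * (p b + ∑ k ∈ J, p k) ^ m := by
                  gcongr; exact le_add_self

theorem stmt7 {Ω : Type*} [MeasurableSpace Ω] (μ : Measure Ω) [IsProbabilityMeasure μ]
    (α : ℝ) (hα : 0 < α)
    (f : ℝ → ℝ) (hf : Admissible f)
    (C : ℕ) (hC : C = Nat.floor α⁻¹)
    (X : ℕ → Ω → Bool) (hmeas : ∀ k, Measurable (X k))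
    (hind : iIndepFun X μ)
    (hprob : ∀ k : ℕ, 1 ≤ k → μ {ω | X k ω = true} = ENNReal.ofReal (1 / (k * f k ^ α)))
    (a : ℝ) (ha : 1 < a)
    (N : ℕ → Ω → ℕ)
    (hN : ∀ n ω, (N n ω : ℕ) = Nat.card {k : ℕ | X k ω = true ∧ (a ^ n < (k : ℝ)) ∧ ((k : ℝ) ≤ a ^ (n + 1))}) :
    (∑' n : ℕ, μ {ω | C + 1 ≤ N n ω} ≠ ⊤) ∧
      ∀ᵐ ω ∂μ, ∀ᶠ n in Filter.atTop, N n ω ≤ C := by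
  obtain ⟨hf1, hfmono, -, hfint⟩ := hf
  have ha0 : (0:ℝ) < a := lt_trans one_pos ha
  have hpow1 : ∀ n : ℕ, (1:ℝ) ≤ a ^ n := fun n => one_le_pow₀ ha.le
  have hpowpos : ∀ n : ℕ, (0:ℝ) < a ^ n := fun n => lt_of_lt_of_le one_pos (hpow1 n)
  have hg1 : ∀ n : ℕ, (1:ℝ) ≤ f (a ^ n) := fun n => hf1 _ (hpow1 n)
  have hg0 : ∀ n : ℕ, (0:ℝ) < f (a ^ n) := fun n => lt_of_lt_of_le one_pos (hg1 n)
  have hgα : ∀ n : ℕ, (0:ℝ) < f (a ^ n) ^ α := fun n => Real.rpow_pos_of_pos (hg0 n) α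
  set β : ℝ := α * (C + 1) with hβdef
  have hβ : 1 < β := by
    have h1 : α⁻¹ < (C:ℝ) + 1 := by
      rw [hC]; push_cast; exact Nat.lt_floor_add_one α⁻¹
    calc (1:ℝ) = α * α⁻¹ := (mul_inv_cancel₀ hα.ne').symm
      _ < α * ((C:ℝ) + 1) := by exact mul_lt_mul_of_pos_left h1 hα
  have hβ0 : (0:ℝ) < β := lt_trans one_pos hβ
  -- the interval finsets
  set I : ℕ → Finset ℕ := fun n => Finset.Ioc ⌊a^n⌋₊ ⌊a^(n+1)⌋₊ with hI
  have hfloor1 : ∀ n : ℕ, 1 ≤ ⌊a^n⌋₊ := fun n => Nat.le_floor (by exact_mod_cast hpow1 n)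
  have hmemI : ∀ n k, k ∈ I n → (a ^ n < (k:ℝ) ∧ (k:ℝ) ≤ a ^ (n+1) ∧ 1 ≤ k) := by
    intro n k hk
    rw [hI, Finset.mem_Ioc] at hk
    refine ⟨(Nat.floor_lt (hpowpos n).le).1 hk.1, ?_, le_trans (hfloor1 n) (le_of_lt hk.1)⟩
    calc (k:ℝ) ≤ (⌊a^(n+1)⌋₊ : ℝ) := by exact_mod_cast hk.2
      _ ≤ a^(n+1) := Nat.floor_le (hpowpos (n+1)).le
  -- Step A: per-n bound
  have key : ∀ n : ℕ, μ {ω | C + 1 ≤ N n ω} ≤ ENNReal.ofReal ((a / f (a^n) ^ α) ^ (C+1)) := by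
    intro n
    have hsub : {ω | C + 1 ≤ N n ω} ⊆ ⋃ S ∈ (I n).powersetCard (C+1), ⋂ k ∈ S, {ω | X k ω = true} := by
      intro ω hω
      have hset : {k : ℕ | X k ω = true ∧ (a ^ n < (k : ℝ)) ∧ ((k : ℝ) ≤ a ^ (n + 1))}
          = ↑((I n).filter fun k => X k ω = true) := by
        ext k
        simp only [Set.mem_setOf_eq, Finset.coe_filter, hI, Finset.mem_Ioc, Set.mem_setOf_eq]
        constructor
        · rintro ⟨h1, h2, h3⟩
          exact ⟨⟨(Nat.floor_lt (hpowpos n).le).2 h2, Nat.le_floor h3⟩, h1⟩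
        · rintro ⟨⟨h2, h3⟩, h1⟩
          refine ⟨h1, (Nat.floor_lt (hpowpos n).le).1 h2, ?_⟩
          calc (k:ℝ) ≤ (⌊a^(n+1)⌋₊ : ℝ) := by exact_mod_cast h3
            _ ≤ a^(n+1) := Nat.floor_le (hpowpos (n+1)).le
      have hcard : N n ω = ((I n).filter fun k => X k ω = true).card := by
        rw [hN n ω, hset, Nat.card_coe_set_eq, Set.ncard_coe_finset]
      obtain ⟨S, hSsub, hScard⟩ := Finset.exists_subset_card_eq (s := (I n).filter fun k => X k ω = true) (n := C+1) (by rw [← hcard]; exact hω)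
      refine Set.mem_biUnion (Finset.mem_powersetCard.2
        ⟨hSsub.trans (Finset.filter_subset _ _), hScard⟩) ?_
      exact Set.mem_biInter fun k hk => (Finset.mem_filter.1 (hSsub hk)).2
    have hsumI : ∑ k ∈ I n, μ {ω | X k ω = true} ≤ ENNReal.ofReal (a / f (a^n) ^ α) := by
      have hAk_le : ∀ k ∈ I n, μ {ω | X k ω = true}
          ≤ ENNReal.ofReal (1 / (a^n * f (a^n) ^ α)) := by
        intro k hk
        obtain ⟨hk1, hk2, hk3⟩ := hmemI n k hk
        rw [hprob k hk3]
        apply ENNReal.ofReal_le_ofReal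
        apply one_div_le_one_div_of_le (mul_pos (hpowpos n) (hgα n))
        have hk1' : (1:ℝ) ≤ (k:ℝ) := le_trans (hpow1 n) hk1.le
        have hfk : f (a^n) ≤ f k :=
          hfmono (Set.mem_Ici.2 (hpow1 n)) (Set.mem_Ici.2 hk1') hk1.le
        have hrk : f (a^n) ^ α ≤ (f k : ℝ) ^ α :=
          Real.rpow_le_rpow (hg0 n).le hfk hα.le
        exact mul_le_mul hk1.le hrk (hgα n).le (le_trans zero_le_one hk1')
      calc ∑ k ∈ I n, μ {ω | X k ω = true}
          ≤ ∑ _k ∈ I n, ENNReal.ofReal (1/(a^n * f (a^n)^α)) := Finset.sum_le_sum hAk_le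
        _ = ((I n).card : ENNReal) * ENNReal.ofReal (1/(a^n * f (a^n)^α)) := by
            rw [Finset.sum_const, nsmul_eq_mul]
        _ ≤ ENNReal.ofReal (a^(n+1)) * ENNReal.ofReal (1/(a^n * f (a^n)^α)) := by
            gcongr
            have hcR : ((I n).card : ℝ) ≤ a^(n+1) := by
              have h1 : (I n).card ≤ ⌊a^(n+1)⌋₊ := by
                rw [hI, Nat.card_Ioc]; exact Nat.sub_le _ _
              calc ((I n).card : ℝ) ≤ (⌊a^(n+1)⌋₊ : ℝ) := by exact_mod_cast h1
                _ ≤ a^(n+1) := Nat.floor_le (hpowpos (n+1)).le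
            calc ((I n).card : ENNReal) = ENNReal.ofReal ((I n).card) :=
                  (ENNReal.ofReal_natCast _).symm
              _ ≤ _ := ENNReal.ofReal_le_ofReal hcR
        _ = ENNReal.ofReal (a / f (a^n) ^ α) := by
            rw [← ENNReal.ofReal_mul (by positivity)]
            congr 1
            field_simp [(hgα n).ne', (hpowpos n).ne', ha0.ne']
            rw [pow_succ]
    calc μ {ω | C + 1 ≤ N n ω}
        ≤ μ (⋃ S ∈ (I n).powersetCard (C+1), ⋂ k ∈ S, {ω | X k ω = true}) := measure_mono hsub
      _ ≤ ∑ S ∈ (I n).powersetCard (C+1), μ (⋂ k ∈ S, {ω | X k ω = true}) :=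
          measure_biUnion_finset_le _ _
      _ = ∑ S ∈ (I n).powersetCard (C+1), ∏ k ∈ S, μ {ω | X k ω = true} := by
          refine Finset.sum_congr rfl fun S hS => ?_
          exact hind.meas_biInter fun k hk => ⟨{true}, trivial, rfl⟩
      _ ≤ (∑ k ∈ I n, μ {ω | X k ω = true}) ^ (C+1) := aux_esymm _ _ _
      _ ≤ (ENNReal.ofReal (a / f (a^n) ^ α)) ^ (C+1) := by gcongr
      _ = ENNReal.ofReal ((a / f (a^n) ^ α) ^ (C+1)) := (ENNReal.ofReal_pow (div_nonneg ha0.le (hgα n).le) _).symm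
  -- Step B: summability of f(a^n)^{-β}
  have hsum0 : ∑' n : ℕ, ENNReal.ofReal (1 / f (a^n) ^ β) ≠ ⊤ := by
    have hε : (0:ℝ) < β - 1 := sub_pos.2 hβ
    have hint := hfint (β - 1) hε
    rw [show 1 + (β - 1) = β by ring] at hint
    set s : ℕ → Set ℝ := fun n => Set.Ioc (a^n) (a^(n+1)) with hs
    have hmeas_s : ∀ n, MeasurableSet (s n) := fun n => measurableSet_Ioc
    have hmono : StrictMono (fun n : ℕ => a ^ n) := fun i j h => pow_lt_pow_right₀ ha h
    have hdisj : Pairwise (Function.onFun Disjoint s) := by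
      intro i j hij
      rcases hij.lt_or_gt with h | h
      · exact Set.Ioc_disjoint_Ioc.2 (le_trans (min_le_left _ _)
          (le_max_of_le_right (hmono.monotone (Nat.succ_le_of_lt h))))
      · exact Set.Ioc_disjoint_Ioc.2 (le_trans (min_le_right _ _)
          (le_max_of_le_left (hmono.monotone (Nat.succ_le_of_lt h))))
    have hsubU : (⋃ n, s n) ⊆ Set.Ici (1:ℝ) := by
      rintro x ⟨t, ⟨n, rfl⟩, hx⟩
      exact Set.mem_Ici.2 (le_trans (hpow1 n) hx.1.le)
    have hlower : ∀ n : ℕ, ENNReal.ofReal ((1 - a⁻¹) * (1 / f (a^(n+1)) ^ β))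
        ≤ ∫⁻ x in s n, ENNReal.ofReal (1 / (x * f x ^ β)) := by
      intro n
      have hGβ : (0:ℝ) < f (a^(n+1)) ^ β := Real.rpow_pos_of_pos (hg0 (n+1)) β
      have hconst : ∀ x ∈ s n, ENNReal.ofReal (1/(a^(n+1) * f (a^(n+1)) ^ β))
          ≤ ENNReal.ofReal (1/(x * f x ^ β)) := by
        intro x hx
        obtain ⟨hx1, hx2⟩ := hx
        have hx1' : (1:ℝ) ≤ x := le_trans (hpow1 n) hx1.le
        have hx0 : (0:ℝ) < x := lt_of_lt_of_le zero_lt_one hx1'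
        have hfx1 : (1:ℝ) ≤ f x := hf1 x hx1'
        apply ENNReal.ofReal_le_ofReal
        apply one_div_le_one_div_of_le
          (mul_pos hx0 (Real.rpow_pos_of_pos (lt_of_lt_of_le zero_lt_one hfx1) β))
        have hfx : f x ≤ f (a^(n+1)) :=
          hfmono (Set.mem_Ici.2 hx1') (Set.mem_Ici.2 (hpow1 (n+1))) hx2
        have hrx : f x ^ β ≤ f (a^(n+1)) ^ β :=
          Real.rpow_le_rpow (le_trans zero_le_one hfx1) hfx hβ0.le
        exact mul_le_mul hx2 hrx (Real.rpow_pos_of_pos (lt_of_lt_of_le zero_lt_one hfx1) β).le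
          (hpowpos (n+1)).le
      calc ENNReal.ofReal ((1 - a⁻¹) * (1 / f (a^(n+1)) ^ β))
          = ENNReal.ofReal (1/(a^(n+1) * f (a^(n+1)) ^ β)) * volume (s n) := by
            rw [hs]
            rw [Real.volume_Ioc, ← ENNReal.ofReal_mul (by positivity)]
            congr 1
            field_simp [hGβ.ne', (hpowpos n).ne', (hpowpos (n+1)).ne', ha0.ne']
            rw [pow_succ]
            ring
        _ = ∫⁻ _x in s n, ENNReal.ofReal (1/(a^(n+1) * f (a^(n+1)) ^ β)) :=
            (setLIntegral_const _ _).symm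
        _ ≤ ∫⁻ x in s n, ENNReal.ofReal (1 / (x * f x ^ β)) :=
            setLIntegral_mono' (hmeas_s n) hconst
    have hchain : ∑' n : ℕ, ENNReal.ofReal ((1 - a⁻¹) * (1 / f (a^(n+1)) ^ β)) ≠ ⊤ := by
      refine ne_top_of_le_ne_top hint ?_
      calc ∑' n : ℕ, ENNReal.ofReal ((1 - a⁻¹) * (1 / f (a^(n+1)) ^ β))
          ≤ ∑' n : ℕ, ∫⁻ x in s n, ENNReal.ofReal (1 / (x * f x ^ β)) :=
            ENNReal.tsum_le_tsum hlower
        _ = ∫⁻ x in ⋃ n, s n, ENNReal.ofReal (1 / (x * f x ^ β)) :=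
            (lintegral_iUnion hmeas_s hdisj _).symm
        _ ≤ ∫⁻ x in Set.Ici (1:ℝ), ENNReal.ofReal (1 / (x * f x ^ β)) :=
            lintegral_mono_set hsubU
    have hcne : ENNReal.ofReal (1 - a⁻¹) ≠ 0 := by
      rw [Ne, ENNReal.ofReal_eq_zero, not_le, sub_pos]
      exact inv_lt_one_of_one_lt₀ ha
    have hshift : ∑' n : ℕ, ENNReal.ofReal (1 / f (a^(n+1)) ^ β) ≠ ⊤ := by
      intro hT
      apply hchain
      have : ∀ n : ℕ, ENNReal.ofReal ((1 - a⁻¹) * (1 / f (a^(n+1)) ^ β))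
          = ENNReal.ofReal (1 - a⁻¹) * ENNReal.ofReal (1 / f (a^(n+1)) ^ β) := fun n =>
        ENNReal.ofReal_mul (by rw [sub_nonneg]; exact (inv_lt_one_of_one_lt₀ ha).le)
      rw [tsum_congr this, ENNReal.tsum_mul_left, hT, ENNReal.mul_top hcne]
    rw [tsum_eq_zero_add' ENNReal.summable]
    exact ENNReal.add_ne_top.2 ⟨ENNReal.ofReal_ne_top, hshift⟩
  -- Step C: combine
  have hrw : ∀ n : ℕ, (a / f (a^n) ^ α) ^ (C+1) = a^(C+1) * (1 / f (a^n) ^ β) := by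
    intro n
    have hfβ : f (a^n) ^ β = (f (a^n) ^ α) ^ (C+1 : ℕ) := by
      rw [← Real.rpow_natCast (f (a^n) ^ α) (C+1), ← Real.rpow_mul (hg0 n).le]
      congr 1
      push_cast
      ring
    rw [div_pow, hfβ]
    field_simp
  have main : ∑' n : ℕ, μ {ω | C + 1 ≤ N n ω} ≠ ⊤ := by
    refine ne_top_of_le_ne_top
      (ENNReal.mul_ne_top (ENNReal.ofReal_ne_top (r := a^(C+1))) hsum0) ?_
    rw [← ENNReal.tsum_mul_left]
    refine ENNReal.tsum_le_tsum fun n => ?_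
    calc μ {ω | C + 1 ≤ N n ω} ≤ ENNReal.ofReal ((a / f (a^n)^α)^(C+1)) := key n
      _ = ENNReal.ofReal (a^(C+1)) * ENNReal.ofReal (1 / f (a^n) ^ β) := by
          rw [hrw n, ENNReal.ofReal_mul (by positivity)]
  refine ⟨main, ?_⟩
  filter_upwards [MeasureTheory.ae_eventually_notMem (s := fun n => {ω | C + 1 ≤ N n ω}) main]
    with ω hω
  refine hω.mono fun n hn => ?_
  simp only [Set.mem_setOf_eq, not_le] at hn
  exact Nat.lt_succ_iff.1 hn
end

section
/- Let X = (X_k)_{k≥1} be independent Bernoulli random variables with P[X_k=1] = p_k. Assume Σ_k p_k = ∞ and Σ_k p_k^2 < ∞. Write E_X = {n_1(X) < n_2(X) < ...}. Then almost surely lim_{k→∞} (n_{k+1}(X) − n_k(X)) = ∞, i.e., E_X does not have bounded gaps. -/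
open MeasureTheory ProbabilityTheory Filter
open scoped ENNReal

lemma det_gap {q : ℕ → Prop} (hinf : (setOf q).Infinite)
    (hgap : ∀ j : ℕ, {m : ℕ | q m ∧ q (m + (j + 1))}.Finite) :
    Tendsto (fun k : ℕ => Nat.nth q (k + 1) - Nat.nth q k) atTop atTop := by
  rw [tendsto_atTop]
  intro d
  have hM : ∀ j : ℕ, ∃ M : ℕ, ∀ m, M ≤ m → ¬(q m ∧ q (m + (j + 1))) := by
    intro j
    obtain ⟨M, hM⟩ := (hgap j).bddAbove
    exact ⟨M + 1, fun m hm hq => by have := hM hq; omega⟩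
  choose Mf hMf using hM
  set M := (Finset.range d).sup Mf with hMdef
  filter_upwards [eventually_ge_atTop M] with k hk
  by_contra hlt
  push_neg at hlt
  have hmono := Nat.nth_strictMono hinf
  have h1 : Nat.nth q k < Nat.nth q (k + 1) := hmono (by omega)
  set g := Nat.nth q (k + 1) - Nat.nth q k with hg
  have hg1 : 1 ≤ g := by omega
  have hgd : g < d := hlt
  set j := g - 1 with hj
  have hjd : j < d := by omega
  have hMle : Mf j ≤ M := Finset.le_sup (Finset.mem_range.mpr hjd)
  have hkM : Mf j ≤ Nat.nth q k := le_trans (le_trans hMle hk) (hmono.le_apply)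
  refine hMf j (Nat.nth q k) hkM ⟨Nat.nth_mem_of_infinite hinf k, ?_⟩
  have : Nat.nth q k + (j + 1) = Nat.nth q (k + 1) := by omega
  rw [this]
  exact Nat.nth_mem_of_infinite hinf (k + 1)

theorem stmt8 {Ω : Type*} [MeasurableSpace Ω] (μ : Measure Ω) [IsProbabilityMeasure μ]
    (X : ℕ → Ω → Bool) (hmeas : ∀ k, Measurable (X k))
    (hind : iIndepFun X μ)
    (p : ℕ → ℝ) (hp : ∀ k, p k ∈ Set.Icc (0 : ℝ) 1)
    (hprob : ∀ k, 1 ≤ k → μ {ω | X k ω = true} = ENNReal.ofReal (p k))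
    (hdiv : ¬ Summable p) (hsq : Summable (fun k => p k ^ 2)) :
    ∀ᵐ ω ∂μ, {k : ℕ | X k ω = true}.Infinite ∧
      Filter.Tendsto (fun k : ℕ =>
        Nat.nth (fun m => X m ω = true) (k + 1) - Nat.nth (fun m => X m ω = true) k)
        Filter.atTop Filter.atTop := by
  classical
  set s : ℕ → Set Ω := fun k => X k ⁻¹' {true} with hs_def
  have hs_eq : ∀ k, s k = {ω | X k ω = true} := fun k => by ext ω; simp [hs_def]
  have hsm : ∀ k, MeasurableSet (s k) := fun k => (hmeas k) (measurableSet_singleton true)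
  have hμs : ∀ k, 1 ≤ k → μ (s k) = ENNReal.ofReal (p k) := by
    intro k hk; rw [hs_eq]; exact hprob k hk
  -- second Borel-Cantelli
  have hindS : iIndepSet s μ := by
    rw [iIndepSet_iff_iIndepSets_singleton hsm, iIndepSets_singleton_iff]
    intro t
    exact hind.measure_inter_preimage_eq_mul t (fun i _ => measurableSet_singleton true)
  have htop : (∑' n, μ (s n)) = ∞ := by
    by_contra h
    have h1 : (∑' n, μ (s (n + 1))) ≠ ∞ :=
      ne_top_of_le_ne_top h (ENNReal.tsum_comp_le_tsum_of_injective (add_left_injective 1) (fun n => μ (s n)))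
    have h3 : (∑' n, ENNReal.ofReal (p (n + 1))) ≠ ∞ := by
      refine ne_of_eq_of_ne (tsum_congr fun n => ?_) h1
      rw [hμs (n + 1) (by omega)]
    have h4 := ENNReal.summable_toReal h3
    have h5 : Summable (fun n => p (n + 1)) := by
      refine h4.congr fun n => ?_
      exact ENNReal.toReal_ofReal (hp (n + 1)).1
    exact hdiv ((summable_nat_add_iff 1).mp h5)
  have hBC2 : μ (limsup s atTop) = 1 := measure_limsup_eq_one hsm hindS htop
  have hae1 : ∀ᵐ ω ∂μ, ω ∈ limsup s atTop := by
    rw [ae_iff]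
    have hcompl : {a | ¬ a ∈ limsup s atTop} = (limsup s atTop)ᶜ := rfl
    rw [hcompl, measure_compl (MeasurableSet.measurableSet_limsup hsm) (measure_ne_top μ _), hBC2,
      measure_univ, tsub_self]
  -- first Borel-Cantelli for pairs
  have hBC1 : ∀ j : ℕ, ∀ᵐ ω ∂μ, {m : ℕ | ω ∈ s m ∩ s (m + (j + 1))}.Finite := by
    intro j
    apply MeasureTheory.ae_finite_setOf_mem
    have hFin : (∑' n, ENNReal.ofReal (p n ^ 2)) ≠ ∞ := by
      rw [← ENNReal.ofReal_tsum_of_nonneg (fun n => sq_nonneg _) hsq]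
      exact ENNReal.ofReal_ne_top
    have key : ∀ m : ℕ, 1 ≤ m → μ (s m ∩ s (m + (j + 1)))
        ≤ ENNReal.ofReal (p m ^ 2) + ENNReal.ofReal (p (m + (j + 1)) ^ 2) := by
      intro m hm
      have hne : m ≠ m + (j + 1) := by omega
      have heq : μ (s m ∩ s (m + (j + 1))) = μ (s m) * μ (s (m + (j + 1))) :=
        (hind.indepFun hne).measure_inter_preimage_eq_mul {true} {true}
          (measurableSet_singleton true) (measurableSet_singleton true)
      rw [heq, hμs m hm, hμs (m + (j + 1)) (by omega), ← ENNReal.ofReal_mul (hp m).1,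
        ← ENNReal.ofReal_add (sq_nonneg _) (sq_nonneg _)]
      apply ENNReal.ofReal_le_ofReal
      nlinarith [sq_nonneg (p m - p (m + (j + 1)))]
    rw [tsum_eq_zero_add' ENNReal.summable]
    refine ENNReal.add_ne_top.mpr ⟨(measure_ne_top μ _), ?_⟩
    have hle : (∑' m, μ (s (m + 1) ∩ s (m + 1 + (j + 1))))
        ≤ ∑' m, (ENNReal.ofReal (p (m + 1) ^ 2) + ENNReal.ofReal (p (m + 1 + (j + 1)) ^ 2)) :=
      ENNReal.tsum_le_tsum fun m => key (m + 1) (by omega)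
    refine ne_top_of_le_ne_top ?_ hle
    rw [ENNReal.tsum_add]
    refine ENNReal.add_ne_top.mpr ⟨?_, ?_⟩
    · exact ne_top_of_le_ne_top hFin
        (ENNReal.tsum_comp_le_tsum_of_injective (add_left_injective 1) (fun n => ENNReal.ofReal (p n ^ 2)))
    · have : (∑' m, ENNReal.ofReal (p (m + 1 + (j + 1)) ^ 2))
          = ∑' m, ENNReal.ofReal (p (m + (j + 2)) ^ 2) :=
        tsum_congr fun m => by rw [show m + 1 + (j + 1) = m + (j + 2) from by omega]
      rw [this]
      exact ne_top_of_le_ne_top hFin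
        (ENNReal.tsum_comp_le_tsum_of_injective (add_left_injective (j + 2))
          (fun n => ENNReal.ofReal (p n ^ 2)))
  -- combine
  filter_upwards [hae1, ae_all_iff.mpr hBC1] with ω h1 h2
  have hmem : ∀ m, ω ∈ s m ↔ X m ω = true := fun m => by simp [hs_def]
  have hinf : {k : ℕ | X k ω = true}.Infinite := by
    rw [mem_limsup_iff_frequently_mem] at h1
    refine Nat.frequently_atTop_iff_infinite.mp ?_
    exact h1.mono fun m hm => (hmem m).mp hm
  refine ⟨hinf, det_gap hinf fun j => ?_⟩
  refine (h2 j).subset fun m hm => ?_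
  exact ⟨(hmem m).mpr hm.1, (hmem _).mpr hm.2⟩
end
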